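/- Let n ≥ 2 and let L = {y ∈ ℝⁿ : y₁ ≥ √(y₂² + ⋯ + yₙ²)} be the Lorentz cone. Let x = (x₁, x²) ∈ ℝ × ℝ^{n−1} be a nonzero vector with x² ≠ 0. Then the absolute value of x with respect to L, namely |x|^L = P_L(x) + P_L(−x) (where P_L denotes the metric projection onto L, and P_L(−x) = P_{L*}(−x) since L is self-dual), is given by |x|^L = (1/‖x²‖)·( max(|x₁|, ‖x²‖)·‖x²‖ , min(|x₁|, ‖x²‖)·sgn(x₁)·x² ), where sgn(x₁) is −1, 0 or 1 according as x₁ is negative, zero or positive. -/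

import Mathlib

open scoped RealInnerProductSpace

/-- The quadratic form `x ↦ ⟨A x, x⟩` associated with a matrix `A`. -/
noncomputable def quadForm {n : ℕ} (A : Matrix (Fin n) (Fin n) ℝ)
    (x : EuclideanSpace ℝ (Fin n)) : ℝ :=
  ⟪Matrix.toEuclideanLin A x, x⟫

/-- `K` is a cone: closed under multiplication by positive scalars. -/
def IsCone {n : ℕ} (K : Set (EuclideanSpace ℝ (Fin n))) : Prop :=
  ∀ ⦃t : ℝ⦄, 0 < t → ∀ ⦃x⦄, x ∈ K → t • x ∈ K

/-- A proper cone: a pointed closed convex cone with nonempty interior. -/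
def IsProperCone {n : ℕ} (K : Set (EuclideanSpace ℝ (Fin n))) : Prop :=
  IsCone K ∧ Convex ℝ K ∧ IsClosed K ∧ K ∩ (-K) ⊆ {0} ∧ (interior K).Nonempty

/-- The dual cone `K* = {u : ⟨u, y⟩ ≥ 0 for all y ∈ K}`. -/
def dualCone {n : ℕ} (K : Set (EuclideanSpace ℝ (Fin n))) : Set (EuclideanSpace ℝ (Fin n)) :=
  {u | ∀ y ∈ K, 0 ≤ ⟪u, y⟫}

/-- The sublevel set `[φ_A ≤ c] = {x ∈ int K : ⟨A x, x⟩ ≤ c ‖x‖²}`. -/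
noncomputable def sublevel {n : ℕ} (A : Matrix (Fin n) (Fin n) ℝ)
    (K : Set (EuclideanSpace ℝ (Fin n))) (c : ℝ) : Set (EuclideanSpace ℝ (Fin n)) :=
  {x ∈ interior K | quadForm A x ≤ c * ‖x‖ ^ 2}

/-- `‖x²‖² = x₂² + ⋯ + xₙ²`, the squared norm of the tail of `x`. -/
noncomputable def tailNormSq {n : ℕ} [NeZero n] (x : EuclideanSpace ℝ (Fin n)) : ℝ :=
  ∑ i ∈ Finset.univ.erase 0, x i ^ 2

/-- The Lorentz cone `{y : √(y₂² + ⋯ + yₙ²) ≤ y₁}`. -/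
noncomputable def lorentzCone (n : ℕ) [NeZero n] : Set (EuclideanSpace ℝ (Fin n)) :=
  {y | Real.sqrt (tailNormSq y) ≤ y 0}

/-- The vector `(a, b·x²)`: first coordinate `a`, `i`-th coordinate `b * xᵢ` for `i ≠ 0`. -/
noncomputable def mk2 {n : ℕ} [NeZero n] (x : EuclideanSpace ℝ (Fin n)) (a b : ℝ) :
    EuclideanSpace ℝ (Fin n) :=
  (WithLp.equiv 2 (Fin n → ℝ)).symm (fun i => if i = 0 then a else b * x i)

namespace LorentzAux

variable {n : ℕ} [NeZero n]

/-- tail of a vector, with first coordinate zeroed -/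
noncomputable def tl (y : EuclideanSpace ℝ (Fin n)) : EuclideanSpace ℝ (Fin n) :=
  (WithLp.equiv 2 (Fin n → ℝ)).symm (fun i => if i = 0 then 0 else y i)

@[simp] lemma tl_apply (y : EuclideanSpace ℝ (Fin n)) (i : Fin n) :
    tl y i = if i = 0 then 0 else y i := rfl

@[simp] lemma mk2_apply (x : EuclideanSpace ℝ (Fin n)) (a b : ℝ) (i : Fin n) :
    mk2 x a b i = if i = 0 then a else b * x i := rfl

lemma tl_add (u v : EuclideanSpace ℝ (Fin n)) : tl (u + v) = tl u + tl v := by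
  ext i; by_cases h : i = 0 <;> simp [tl_apply, PiLp.add_apply, h]

lemma tl_smul (c : ℝ) (u : EuclideanSpace ℝ (Fin n)) : tl (c • u) = c • tl u := by
  ext i; by_cases h : i = 0 <;> simp [tl_apply, PiLp.smul_apply, h]

lemma tl_neg (u : EuclideanSpace ℝ (Fin n)) : tl (-u) = -tl u := by
  ext i; by_cases h : i = 0 <;> simp [tl_apply, PiLp.neg_apply, h]

lemma tl_sub (u v : EuclideanSpace ℝ (Fin n)) : tl (u - v) = tl u - tl v := by
  ext i; by_cases h : i = 0 <;> simp [tl_apply, PiLp.sub_apply, h]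

lemma tl_mk2 (x : EuclideanSpace ℝ (Fin n)) (a b : ℝ) : tl (mk2 x a b) = b • tl x := by
  ext i; by_cases h : i = 0 <;> simp [tl_apply, PiLp.smul_apply, h]

lemma sqrt_tailNormSq (y : EuclideanSpace ℝ (Fin n)) :
    Real.sqrt (tailNormSq y) = ‖tl y‖ := by
  rw [EuclideanSpace.norm_eq, tailNormSq]
  congr 1
  rw [← Finset.sum_erase Finset.univ (a := (0 : Fin n))
    (f := fun i => ‖tl y i‖ ^ 2) (by simp)]
  refine Finset.sum_congr rfl fun i hi => ?_
  rw [tl_apply, if_neg (Finset.mem_erase.1 hi).1, Real.norm_eq_abs, sq_abs]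

lemma mem_lorentz {y : EuclideanSpace ℝ (Fin n)} :
    y ∈ lorentzCone n ↔ ‖tl y‖ ≤ y 0 := by
  rw [lorentzCone, Set.mem_setOf_eq, sqrt_tailNormSq]

lemma inner_tl (u v : EuclideanSpace ℝ (Fin n)) :
    ⟪tl u, tl v⟫ = ∑ i ∈ Finset.univ.erase 0, u i * v i := by
  simp only [PiLp.inner_apply, RCLike.inner_apply, conj_trivial, tl_apply]
  rw [← Finset.sum_erase Finset.univ (a := (0 : Fin n))
    (f := fun i => (if i = 0 then 0 else v i) * (if i = 0 then 0 else u i)) (by simp)]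
  refine Finset.sum_congr rfl fun i hi => ?_
  rw [if_neg (Finset.mem_erase.1 hi).1, if_neg (Finset.mem_erase.1 hi).1, mul_comm]

lemma inner_split (u v : EuclideanSpace ℝ (Fin n)) :
    ⟪u, v⟫ = u 0 * v 0 + ⟪tl u, tl v⟫ := by
  rw [inner_tl]
  simp only [PiLp.inner_apply, RCLike.inner_apply, conj_trivial]
  rw [Finset.add_sum_erase _ (fun i => u i * v i) (Finset.mem_univ (0 : Fin n))]
  exact Finset.sum_congr rfl fun i _ => mul_comm _ _

/-- variational inequality implies nearest point -/
lemma nearest_of_vi (z p₀ : EuclideanSpace ℝ (Fin n))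
    (h : ∀ y ∈ lorentzCone n, ⟪z - p₀, y - p₀⟫ ≤ 0) :
    ∀ y ∈ lorentzCone n, ‖z - p₀‖ ≤ ‖z - y‖ := by
  intro y hy
  have h2 := h y hy
  have e : z - y = (z - p₀) - (y - p₀) := by abel
  have h3 : ‖z - p₀‖ ^ 2 ≤ ‖z - y‖ ^ 2 := by
    rw [e]
    nlinarith [norm_sub_sq_real (z - p₀) (y - p₀), sq_nonneg ‖y - p₀‖]
  nlinarith [norm_nonneg (z - y), norm_nonneg (z - p₀)]

lemma tl_zero : tl (0 : EuclideanSpace ℝ (Fin n)) = 0 := by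
  ext i; by_cases h : i = 0 <;> simp [tl_apply, h]

lemma mid_mem {a b : EuclideanSpace ℝ (Fin n)} (ha : a ∈ lorentzCone n)
    (hb : b ∈ lorentzCone n) : (1/2 : ℝ) • (a + b) ∈ lorentzCone n := by
  rw [mem_lorentz] at ha hb ⊢
  rw [tl_smul, tl_add, norm_smul]
  have h0 : ((1/2 : ℝ) • (a + b)) 0 = (1/2 : ℝ) * (a 0 + b 0) := by
    simp [PiLp.smul_apply, PiLp.add_apply]; ring
  rw [h0, Real.norm_eq_abs]
  have habs : |(1/2 : ℝ)| = 1/2 := by norm_num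
  rw [habs]
  nlinarith [norm_add_le (tl a) (tl b)]

lemma nearest_unique (z p p' : EuclideanSpace ℝ (Fin n))
    (hpL : p ∈ lorentzCone n) (hp : ∀ y ∈ lorentzCone n, ‖z - p‖ ≤ ‖z - y‖)
    (hp'L : p' ∈ lorentzCone n) (hp' : ∀ y ∈ lorentzCone n, ‖z - p'‖ ≤ ‖z - y‖) :
    p = p' := by
  have hm := mid_mem hpL hp'L
  have e1 := hp _ hp'L
  have e2 := hp' _ hpL
  have e3 := hp _ hm
  have key : (z - p) + (z - p') = (2:ℝ) • (z - (1/2:ℝ) • (p + p')) := by module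
  have par := parallelogram_law_with_norm ℝ (z - p) (z - p')
  rw [key] at par
  have h4 : ‖(2:ℝ) • (z - (1/2:ℝ) • (p + p'))‖ = 2 * ‖z - (1/2:ℝ) • (p + p')‖ := by
    rw [norm_smul]; norm_num
  have h5 : (z - p) - (z - p') = p' - p := by abel
  rw [h4, h5] at par
  have hsq : ‖p' - p‖ * ‖p' - p‖ ≤ 0 := by
    nlinarith [mul_self_le_mul_self (norm_nonneg (z - p)) e3,
      mul_self_le_mul_self (norm_nonneg (z - p)) e1,
      mul_self_le_mul_self (norm_nonneg (z - p')) e2]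
  have : p' - p = 0 := by
    rw [← norm_eq_zero]
    nlinarith [norm_nonneg (p' - p)]
  exact (sub_eq_zero.mp this).symm

lemma nearest_self (z : EuclideanSpace ℝ (Fin n)) :
    ∀ y ∈ lorentzCone n, ‖z - z‖ ≤ ‖z - y‖ := by
  intro y _; rw [sub_self, norm_zero]; exact norm_nonneg _

lemma nearest_zero (z : EuclideanSpace ℝ (Fin n)) (hz : z 0 ≤ -‖tl z‖) :
    ∀ y ∈ lorentzCone n, ‖z - 0‖ ≤ ‖z - y‖ := by
  apply nearest_of_vi
  intro y hy
  rw [mem_lorentz] at hy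
  rw [sub_zero, sub_zero, inner_split]
  have cs := real_inner_le_norm (tl z) (tl y)
  have hy0 : (0:ℝ) ≤ y 0 := le_trans (norm_nonneg _) hy
  nlinarith [norm_nonneg (tl z), norm_nonneg (tl y)]

lemma nearest_mid (z : EuclideanSpace ℝ (Fin n)) (hr : 0 < ‖tl z‖)
    (h1 : -‖tl z‖ < z 0) (h2 : z 0 ≤ ‖tl z‖) :
    mk2 z ((z 0 + ‖tl z‖)/2) ((z 0 + ‖tl z‖)/(2*‖tl z‖)) ∈ lorentzCone n ∧
    ∀ y ∈ lorentzCone n,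
      ‖z - mk2 z ((z 0 + ‖tl z‖)/2) ((z 0 + ‖tl z‖)/(2*‖tl z‖))‖ ≤ ‖z - y‖ := by
  set r := ‖tl z‖ with hrdef
  set s : ℝ := (z 0 + r)/2 with hs
  set b : ℝ := (z 0 + r)/(2*r) with hb
  have hs0 : 0 < s := by rw [hs]; linarith
  have hbr : b * r = s := by rw [hb, hs]; field_simp
  have hb0 : 0 ≤ b := by
    rw [hb]; exact div_nonneg (by linarith) (by linarith)
  set c := mk2 z s b with hc
  have hc0 : c 0 = s := by rw [hc]; simp [mk2_apply]
  have hcmem : c ∈ lorentzCone n := by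
    rw [mem_lorentz, hc, tl_mk2, norm_smul, Real.norm_eq_abs, abs_of_nonneg hb0, ← hrdef]
    have e : mk2 z s b 0 = s := by simp [mk2_apply]
    rw [e, hbr]
  refine ⟨hcmem, nearest_of_vi _ _ ?_⟩
  intro y hy
  rw [mem_lorentz] at hy
  set ip := ⟪tl z, tl y⟫ with hip
  have cs : ip ≤ r * ‖tl y‖ := real_inner_le_norm (tl z) (tl y)
  have expand : ⟪z - c, y - c⟫ = (z 0 - s)*(y 0 - s) + ((1-b) * (ip - b * (r*r))) := by
    rw [inner_split]
    have e0 : (z - c) 0 * (y - c) 0 = (z 0 - s)*(y 0 - s) := by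
      simp [PiLp.sub_apply, hc0]
    rw [e0, tl_sub, tl_sub, hc, tl_mk2]
    have e2 : ⟪tl z - b • tl z, tl y - b • tl z⟫
        = (1 - b) * (⟪tl z, tl y⟫ - b * (‖tl z‖ * ‖tl z‖)) := by
      simp only [inner_sub_left, inner_sub_right, real_inner_smul_left, real_inner_smul_right]
      rw [real_inner_self_eq_norm_mul_norm]
      ring
    rw [e2, ← hrdef, ← hip]
  rw [expand]
  have hA : 0 ≤ (r - z 0) * (r * y 0 - ip) := by
    apply mul_nonneg (by linarith)
    nlinarith [norm_nonneg (tl y)]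
  have hEq : 2 * r * ((z 0 - s)*(y 0 - s) + ((1-b) * (ip - b * (r*r)))) =
      -((r - z 0) * (r * y 0 - ip)) := by
    rw [hs, hb]; field_simp; ring
  nlinarith

end LorentzAux

open LorentzAux in
/-- Formula for the absolute value `|x|^L = P_L(x) + P_{L*}(-x)` of a nonzero vector `x`
with `x² ≠ 0`, where `p = P_L(x)` and `q = P_L(-x) = P_{L*}(-x)` are characterized as
nearest points in the Lorentz cone. -/
theorem stmt1 (n : ℕ) [NeZero n] (hn : 2 ≤ n) (x : EuclideanSpace ℝ (Fin n))
    (hx0 : x ≠ 0) (hx2 : ∃ i : Fin n, i ≠ 0 ∧ x i ≠ 0)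
    (p q : EuclideanSpace ℝ (Fin n))
    (hpL : p ∈ lorentzCone n) (hp : ∀ y ∈ lorentzCone n, ‖x - p‖ ≤ ‖x - y‖)
    (hqL : q ∈ lorentzCone n) (hq : ∀ y ∈ lorentzCone n, ‖(-x) - q‖ ≤ ‖(-x) - y‖) :
    p + q = (1 / Real.sqrt (tailNormSq x)) •
      mk2 x (max |x 0| (Real.sqrt (tailNormSq x)) * Real.sqrt (tailNormSq x))
        (min |x 0| (Real.sqrt (tailNormSq x)) * Real.sign (x 0)) := by
  obtain ⟨j, hj0, hxj⟩ := hx2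
  have htlj : tl x j ≠ 0 := by rw [tl_apply, if_neg hj0]; exact hxj
  have htlx : tl x ≠ 0 := fun h => htlj (by rw [h]; rfl)
  have hr : 0 < ‖tl x‖ := norm_pos_iff.mpr htlx
  set r := ‖tl x‖ with hrdef
  rw [sqrt_tailNormSq, ← hrdef]
  have hnegx0 : (-x) 0 = -(x 0) := by simp [PiLp.neg_apply]
  have htlneg : ‖tl (-x)‖ = r := by rw [tl_neg, norm_neg, hrdef]
  have h0L : (0 : EuclideanSpace ℝ (Fin n)) ∈ lorentzCone n := by
    rw [mem_lorentz, tl_zero, norm_zero]; simp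
  by_cases hA : r ≤ x 0
  · -- p = x, q = 0
    have hxL : x ∈ lorentzCone n := mem_lorentz.mpr hA
    have hpx : p = x := nearest_unique x p x hpL hp hxL (nearest_self x)
    have hq0 : q = 0 := by
      apply nearest_unique (-x) q 0 hqL hq h0L
      apply nearest_zero
      rw [hnegx0, htlneg]; linarith
    have hx0pos : 0 < x 0 := lt_of_lt_of_le hr hA
    have habs : |x 0| = x 0 := abs_of_pos hx0pos
    rw [hpx, hq0, habs, max_eq_left hA, min_eq_right hA, Real.sign_of_pos hx0pos]
    ext i
    by_cases hi : i = 0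
    · subst hi
      simp only [PiLp.add_apply, PiLp.smul_apply, mk2_apply, if_pos rfl, ↓reduceIte, PiLp.zero_apply, smul_eq_mul]
      field_simp
      all_goals ring
    · simp only [PiLp.add_apply, PiLp.smul_apply, mk2_apply, if_neg hi, PiLp.zero_apply, smul_eq_mul]
      field_simp
      all_goals ring
  · by_cases hB : x 0 ≤ -r
    · -- p = 0, q = -x
      have hnxL : (-x) ∈ lorentzCone n := by
        rw [mem_lorentz, htlneg, hnegx0]; linarith
      have hqx : q = -x := nearest_unique (-x) q (-x) hqL hq hnxL (nearest_self (-x))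
      have hp0 : p = 0 := by
        apply nearest_unique x p 0 hpL hp h0L
        apply nearest_zero
        rw [← hrdef]; linarith
      have hx0neg : x 0 < 0 := by linarith
      have habs : |x 0| = -(x 0) := abs_of_neg hx0neg
      have hmax : max |x 0| r = |x 0| := max_eq_left (by rw [habs]; linarith)
      have hmin : min |x 0| r = r := min_eq_right (by rw [habs]; linarith)
      rw [hqx, hp0, hmax, hmin, habs, Real.sign_of_neg hx0neg]
      ext i
      by_cases hi : i = 0
      · subst hi
        simp only [PiLp.add_apply, PiLp.smul_apply, PiLp.neg_apply, mk2_apply, if_pos rfl, ↓reduceIte,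
          smul_eq_mul, zero_add]
        field_simp
        all_goals ring
      · simp only [PiLp.add_apply, PiLp.smul_apply, PiLp.neg_apply, mk2_apply, if_neg hi,
          smul_eq_mul, zero_add]
        field_simp
        all_goals ring
    · -- -r < x 0 < r
      push_neg at hA hB
      have hcx := nearest_mid x hr hB hA.le
      have hcnx := nearest_mid (-x) (by rw [htlneg]; exact hr)
        (by rw [htlneg, hnegx0]; linarith) (by rw [htlneg, hnegx0]; linarith)
      rw [htlneg, hnegx0] at hcnx
      have hpc : p = mk2 x ((x 0 + r)/2) ((x 0 + r)/(2*r)) :=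
        nearest_unique x p _ hpL hp hcx.1 hcx.2
      have hqc : q = mk2 (-x) ((-(x 0) + r)/2) ((-(x 0) + r)/(2*r)) :=
        nearest_unique (-x) q _ hqL hq hcnx.1 hcnx.2
      have habs : |x 0| ≤ r := abs_le.mpr ⟨by linarith, hA.le⟩
      have hmax : max |x 0| r = r := max_eq_right habs
      have hmin : min |x 0| r = |x 0| := min_eq_left habs
      have hsgn : |x 0| * Real.sign (x 0) = x 0 := by
        rcases lt_trichotomy (x 0) 0 with h | h | h
        · rw [Real.sign_of_neg h, abs_of_neg h]; ring
        · rw [h]; simp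
        · rw [Real.sign_of_pos h, abs_of_pos h]; ring
      rw [hpc, hqc, hmax, hmin, hsgn]
      ext i
      by_cases hi : i = 0
      · subst hi
        simp only [PiLp.add_apply, PiLp.smul_apply, mk2_apply, if_pos rfl, ↓reduceIte, PiLp.zero_apply, smul_eq_mul]
        field_simp
        all_goals ring
      · simp only [PiLp.add_apply, PiLp.smul_apply, PiLp.neg_apply, mk2_apply, if_neg hi,
          smul_eq_mul]
        field_simp
        all_goals ring
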